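/- Let P = {0,1,…,n} with its usual order and metric (as a subspace of ℝ). The space of monotone step functions [0,1) → P with the L_1 metric (i.e., the Hartman–Mycielski realization |P|_HM of the order complex) is isometric to the standard skew n-simplex {(t_1,…,t_n) ∈ ℝ^n : 0 ≤ t_1 ≤ ⋯ ≤ t_n ≤ 1} with the l_1 metric. -/

import Mathlib

open Classical MeasureTheory

lemma aux_ind (a b s : ℝ) (hab : a ≤ b) :
    |(if a ≤ s then (1:ℝ) else 0) - (if b ≤ s then (1:ℝ) else 0)|
      = (Set.Ico a b).indicator (fun _ => (1:ℝ)) s := by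
  by_cases h1 : a ≤ s <;> by_cases h2 : b ≤ s
  · simp [Set.indicator_apply, Set.mem_Ico, h1, h2, h2.not_gt]
  · simp [Set.indicator_apply, Set.mem_Ico, h1, h2, not_le.1 h2]
  · exact absurd (hab.trans h2) h1
  · simp [Set.indicator_apply, Set.mem_Ico, h1, h2]

/-- Let `P = {0,1,…,n} ⊂ ℝ`.  The Hartman–Mycielski realization `|P|_HM` of the order
complex (monotone step functions `[0,1) → P` with the `L_1` metric) is isometric to the
standard skew simplex `{0 ≤ t_1 ≤ ⋯ ≤ t_n ≤ 1}` with the `l_1` metric: the correspondence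
sends `(t_1,…,t_n)` to the step function `s ↦ #{i : t_i ≤ s}` (whose level sets are the
intervals `[t_i, t_{i+1})`), and it preserves distances. -/
theorem stmt13 (n : ℕ) (T S : Fin n → ℝ)
    (hTmono : Monotone T) (hT : ∀ i, T i ∈ Set.Icc (0 : ℝ) 1)
    (hSmono : Monotone S) (hS : ∀ i, S i ∈ Set.Icc (0 : ℝ) 1) :
    (∫ s in Set.Ico (0 : ℝ) 1,
        |((Finset.univ.filter (fun i : Fin n => T i ≤ s)).card : ℝ)
          - ((Finset.univ.filter (fun i : Fin n => S i ≤ s)).card : ℝ)|)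
      = ∑ i, |T i - S i| := by
  set t : Fin n → ℝ → ℝ :=
    fun i s => (if T i ≤ s then (1:ℝ) else 0) - (if S i ≤ s then (1:ℝ) else 0) with ht
  have hcard : ∀ s : ℝ, ((Finset.univ.filter (fun i : Fin n => T i ≤ s)).card : ℝ)
      - ((Finset.univ.filter (fun i : Fin n => S i ≤ s)).card : ℝ) = ∑ i, t i s := by
    intro s
    rw [Finset.card_filter, Finset.card_filter]
    push_cast
    rw [← Finset.sum_sub_distrib]
  have hsign : ∀ s : ℝ, (∀ i, 0 ≤ t i s) ∨ (∀ i, t i s ≤ 0) := by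
    intro s
    by_contra h
    push_neg at h
    obtain ⟨⟨i, hi⟩, j, hj⟩ := h
    simp only [ht] at hi hj
    split_ifs at hi hj <;> norm_num at hi <;> norm_num at hj
    rcases le_total i j with hij | hij
    · exact ‹¬T i ≤ s› (le_trans (hTmono hij) ‹T j ≤ s›)
    · exact ‹¬S j ≤ s› (le_trans (hSmono hij) ‹S i ≤ s›)
  have habs : ∀ s : ℝ, |∑ i, t i s| = ∑ i, |t i s| := by
    intro s
    rcases hsign s with h | h
    · rw [abs_of_nonneg (Finset.sum_nonneg fun i _ => h i)]
      exact Finset.sum_congr rfl fun i _ => (abs_of_nonneg (h i)).symm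
    · rw [abs_of_nonpos (Finset.sum_nonpos fun i _ => h i), ← Finset.sum_neg_distrib]
      exact Finset.sum_congr rfl fun i _ => (abs_of_nonpos (h i)).symm
  have hind : ∀ i : Fin n, (fun s => |t i s|)
      = (Set.Ico (min (T i) (S i)) (max (T i) (S i))).indicator (fun _ => (1:ℝ)) := by
    intro i
    funext s
    rcases le_total (T i) (S i) with hts | hts
    · rw [min_eq_left hts, max_eq_right hts, ← aux_ind (T i) (S i) s hts]
    · rw [min_eq_right hts, max_eq_left hts, ← aux_ind (S i) (T i) s hts, ht]
      exact abs_sub_comm _ _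
  have hIcc : ∀ i : Fin n, Set.Ico (min (T i) (S i)) (max (T i) (S i)) ⊆ Set.Ico (0:ℝ) 1 := by
    intro i x hx
    obtain ⟨hx1, hx2⟩ := hx
    constructor
    · exact le_trans (le_min (hT i).1 (hS i).1) hx1
    · exact lt_of_lt_of_le hx2 (max_le (hT i).2 (hS i).2)
  have hinteg : ∀ i : Fin n, Integrable (fun s => |t i s|)
      (volume.restrict (Set.Ico (0:ℝ) 1)) := by
    intro i
    rw [hind i]
    rw [integrable_indicator_iff measurableSet_Ico]
    exact integrableOn_const (lt_of_le_of_lt (Measure.restrict_apply_le _ _)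
      (by rw [Real.volume_Ico]; exact ENNReal.ofReal_lt_top)).ne
  have hint : ∀ i : Fin n, ∫ s in Set.Ico (0:ℝ) 1, |t i s| = |T i - S i| := by
    intro i
    rw [hind i, setIntegral_indicator measurableSet_Ico,
      Set.inter_eq_right.2 (hIcc i), setIntegral_const]
    rw [measureReal_def, Real.volume_Ico, ENNReal.toReal_ofReal (by simp [min_le_max] : (0:ℝ) ≤ _)]
    rw [smul_eq_mul, mul_one, max_sub_min_eq_abs]
    exact abs_sub_comm _ _
  calc (∫ s in Set.Ico (0 : ℝ) 1,
        |((Finset.univ.filter (fun i : Fin n => T i ≤ s)).card : ℝ)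
          - ((Finset.univ.filter (fun i : Fin n => S i ≤ s)).card : ℝ)|)
      = ∫ s in Set.Ico (0:ℝ) 1, ∑ i, |t i s| := by
        refine setIntegral_congr_fun measurableSet_Ico fun s _ => ?_
        rw [hcard s, habs s]
    _ = ∑ i, ∫ s in Set.Ico (0:ℝ) 1, |t i s| :=
        integral_finset_sum _ fun i _ => hinteg i
    _ = ∑ i, |T i - S i| := Finset.sum_congr rfl fun i _ => hint i
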